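/- Let R be a complex-valued continuous function on the triangle {(x,t) : 0 ≤ t ≤ x ≤ π}, and let K₁, K₂ be complex-valued continuous functions on this triangle. Suppose that for each λ ∈ ℂ, w(x,λ) = exp(−iλx) + ∫₀ˣ K₁(x,t)·exp(−iλt) dt and ẽ(x,λ) = exp(−iλx) + ∫₀ˣ K₂(x,t)·exp(−iλt) dt, and define z(x,λ) := ∫₀ˣ R(π−t, x−t)·w(t,λ)·ẽ(x−t,λ) dt. Then there exists a continuous function K on the triangle {(x,t) : 0 ≤ t ≤ x ≤ π}, independent of λ, such that z(x,λ) = B(x)·exp(−iλx) + ∫₀ˣ K(x,t)·exp(−iλt) dt for all x ∈ [0,π] and λ ∈ ℂ, where B(x) = ∫₀ˣ R(π−t, x−t) dt. -/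

import Mathlib

open Complex MeasureTheory Set Real

/-- The triangle `{(x,t) : 0 ≤ t ≤ x ≤ π}`. -/
def Triangle : Set (ℝ × ℝ) := {p | 0 ≤ p.2 ∧ p.2 ≤ p.1 ∧ p.1 ≤ Real.pi}

section Helpers

lemma tri_closed : IsClosed Triangle := by
  refine IsClosed.inter (isClosed_le continuous_const continuous_snd)
    (IsClosed.inter (isClosed_le continuous_snd continuous_fst)
      (isClosed_le continuous_fst continuous_const))

lemma exists_ext (f : ℝ × ℝ → ℂ) (s : Set (ℝ × ℝ)) (hs : IsClosed s)
    (hf : ContinuousOn f s) : ∃ g : ℝ × ℝ → ℂ, Continuous g ∧ ∀ p ∈ s, g p = f p := by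
  obtain ⟨g, hg⟩ := ContinuousMap.exists_restrict_eq (Y := ℂ) hs ⟨_, hf.restrict⟩
  exact ⟨g, g.continuous, fun p hp => by
    have := congrFun (congrArg DFunLike.coe hg) ⟨p, hp⟩
    simpa using this⟩

/-- parametric interval integral with both endpoints varying -/
lemma cont_param {X : Type*} [TopologicalSpace X] [FirstCountableTopology X]
    {F : X → ℝ → ℂ} (hF : Continuous ↿F) {a b : X → ℝ}
    (ha : Continuous a) (hb : Continuous b) :
    Continuous fun x => ∫ t in a x..b x, F x t := by
  have key : ∀ x, (∫ t in a x..b x, F x t)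
      = (∫ t in (0:ℝ)..b x, F x t) - ∫ t in (0:ℝ)..a x, F x t := by
    intro x
    rw [intervalIntegral.integral_interval_sub_left
      ((hF.uncurry_left x).intervalIntegrable _ _) ((hF.uncurry_left x).intervalIntegrable _ _)]
  simp only [key]
  exact (intervalIntegral.continuous_parametric_intervalIntegral_of_continuous hF hb).sub
    (intervalIntegral.continuous_parametric_intervalIntegral_of_continuous hF ha)

lemma swap_master (H : ℝ → ℝ → ℂ) (hH : Continuous ↿H)
    (a c : ℝ) (ha : 0 ≤ a) (hc : 0 ≤ c) (f g φ ψ : ℝ → ℝ)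
    (hD : MeasurableSet {p : ℝ × ℝ | p.1 ∈ Ioc 0 a ∧ p.2 ∈ Ioc (f p.1) (g p.1)})
    (hfg : ∀ t ∈ Ioc 0 a, f t ≤ g t)
    (hbound : ∀ t ∈ Ioc 0 a, Ioc (f t) (g t) ⊆ Ioc 0 c)
    (hφψ : ∀ u ∈ Ioc 0 c, φ u ≤ ψ u)
    (hsec : ∀ u ∈ Ioc 0 c, ∀ᵐ t : ℝ,
      ((t ∈ Ioc 0 a ∧ u ∈ Ioc (f t) (g t)) ↔ t ∈ Ioc (φ u) (ψ u))) :
    (∫ t in (0:ℝ)..a, ∫ u in f t..g t, H t u) = ∫ u in (0:ℝ)..c, ∫ t in φ u..ψ u, H t u := by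
  set D : Set (ℝ × ℝ) := {p : ℝ × ℝ | p.1 ∈ Ioc 0 a ∧ p.2 ∈ Ioc (f p.1) (g p.1)} with hDdef
  set W : ℝ → ℝ → ℂ := fun t u => D.indicator (fun p => H p.1 p.2) (t, u) with hWdef
  have hWmem : ∀ t u, (t, u) ∈ D → W t u = H t u := fun t u h => Set.indicator_of_mem h _
  have hWnmem : ∀ t u, (t, u) ∉ D → W t u = 0 := fun t u h => Set.indicator_of_notMem h _
  have hbox : D ⊆ Icc 0 a ×ˢ Icc 0 c := by
    rintro ⟨t, u⟩ ⟨ht, hu⟩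
    have h2 := hbound t ht hu
    exact ⟨⟨ht.1.le, ht.2⟩, ⟨h2.1.le, h2.2⟩⟩
  have hcompact : IsCompact (Icc (0:ℝ) a ×ˢ Icc (0:ℝ) c) := isCompact_Icc.prod isCompact_Icc
  obtain ⟨M, hM⟩ := hcompact.bddAbove_image (hH.norm.continuousOn)
  rw [mem_upperBounds] at hM
  have hM0 : 0 ≤ M := by
    have := hM (‖(↿H) ((0:ℝ), (0:ℝ))‖) ⟨((0:ℝ), (0:ℝ)), ⟨⟨le_refl _, ha⟩, ⟨le_refl _, hc⟩⟩, rfl⟩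
    exact le_trans (norm_nonneg _) this
  have hint : Integrable (Function.uncurry W) ((volume : Measure ℝ).prod volume) := by
    have huncurry : Function.uncurry W = D.indicator (fun p => H p.1 p.2) := by
      funext p; exact congrArg _ rfl
    rw [huncurry, ← Measure.volume_eq_prod]
    apply Integrable.mono' (g := (Icc (0:ℝ) a ×ˢ Icc (0:ℝ) c).indicator fun _ => M)
    · rw [integrable_indicator_iff (measurableSet_Icc.prod measurableSet_Icc)]
      exact integrableOn_const ((isCompact_Icc.prod isCompact_Icc).measure_lt_top.ne)
    · exact ((hH.comp (continuous_fst.prodMk continuous_snd)).aestronglyMeasurable).indicator hD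
    · apply Filter.Eventually.of_forall
      intro p
      by_cases hp : p ∈ D
      · rw [Set.indicator_of_mem hp, Set.indicator_of_mem (hbox hp)]
        exact hM _ ⟨p, hbox hp, rfl⟩
      · rw [Set.indicator_of_notMem hp, norm_zero]
        by_cases hp' : p ∈ Icc (0:ℝ) a ×ˢ Icc (0:ℝ) c
        · rw [Set.indicator_of_mem hp']; exact hM0
        · rw [Set.indicator_of_notMem hp']
  have L : (∫ t in (0:ℝ)..a, ∫ u in f t..g t, H t u) = ∫ t : ℝ, ∫ u : ℝ, W t u := by
    rw [intervalIntegral.integral_of_le ha, ← MeasureTheory.integral_indicator measurableSet_Ioc]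
    congr 1; funext t
    by_cases ht : t ∈ Ioc 0 a
    · rw [Set.indicator_of_mem ht, intervalIntegral.integral_of_le (hfg t ht),
        ← MeasureTheory.integral_indicator measurableSet_Ioc]
      congr 1; funext u
      by_cases hu : u ∈ Ioc (f t) (g t)
      · rw [Set.indicator_of_mem hu, hWmem t u ⟨ht, hu⟩]
      · rw [Set.indicator_of_notMem hu, hWnmem t u (fun h => hu h.2)]
    · rw [Set.indicator_of_notMem ht]
      have : ∀ u, W t u = 0 := fun u => hWnmem t u (fun h => ht h.1)
      simp [this]
  have Rr : (∫ u : ℝ, ∫ t : ℝ, W t u) = ∫ u in (0:ℝ)..c, ∫ t in φ u..ψ u, H t u := by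
    rw [intervalIntegral.integral_of_le hc, ← MeasureTheory.integral_indicator measurableSet_Ioc]
    congr 1; funext u
    by_cases hu : u ∈ Ioc 0 c
    · rw [Set.indicator_of_mem hu, intervalIntegral.integral_of_le (hφψ u hu),
        ← MeasureTheory.integral_indicator measurableSet_Ioc]
      apply MeasureTheory.integral_congr_ae
      filter_upwards [hsec u hu] with t hiff
      by_cases h : t ∈ Ioc (φ u) (ψ u)
      · rw [Set.indicator_of_mem h, hWmem t u (hiff.mpr h)]
      · rw [Set.indicator_of_notMem h, hWnmem t u (fun hd => h (hiff.mp ⟨hd.1, hd.2⟩))]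
    · rw [Set.indicator_of_notMem hu]
      have : ∀ t, W t u = 0 := fun t => hWnmem t u (fun h => hu (hbound _ h.1 h.2))
      simp [this]
  rw [L, MeasureTheory.integral_integral_swap hint, Rr]

lemma ae_ne_real (u : ℝ) : ∀ᵐ t : ℝ, t ≠ u := by
  have h := (Set.finite_singleton u).measure_zero (volume : Measure ℝ)
  filter_upwards [measure_eq_zero_iff_ae_notMem.mp h] with t ht
  simpa using ht

lemma swapA (H : ℝ → ℝ → ℂ) (hH : Continuous ↿H) (x : ℝ) (hx : 0 ≤ x) :
    (∫ t in (0:ℝ)..x, ∫ u in t..x, H t u) = ∫ u in (0:ℝ)..x, ∫ t in (0:ℝ)..u, H t u := by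
  apply swap_master H hH x x hx hx _ _ _ _ ?_ ?_ ?_ ?_ ?_
  · have : {p : ℝ × ℝ | p.1 ∈ Ioc 0 x ∧ p.2 ∈ Ioc (p.1) x} =
      ({p : ℝ × ℝ | 0 < p.1} ∩ {p | p.1 ≤ x} ∩ ({p | p.1 < p.2} ∩ {p | p.2 ≤ x})) := by
      ext p; simp [Set.mem_Ioc]
    rw [this]
    exact (((measurableSet_lt measurable_const measurable_fst).inter
      (measurableSet_le measurable_fst measurable_const)).inter
      ((measurableSet_lt measurable_fst measurable_snd).inter
      (measurableSet_le measurable_snd measurable_const)))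
  · exact fun t ht => ht.2
  · rintro t ht v ⟨h1, h2⟩; exact ⟨lt_trans ht.1 h1, h2⟩
  · exact fun u hu => hu.1.le
  · intro u hu
    filter_upwards [ae_ne_real u] with t hne
    constructor
    · rintro ⟨⟨ht0, _⟩, ⟨htu, _⟩⟩; exact ⟨ht0, htu.le⟩
    · rintro ⟨ht0, htu⟩
      have hlt : t < u := lt_of_le_of_ne htu hne
      exact ⟨⟨ht0, le_trans htu hu.2⟩, ⟨hlt, hu.2⟩⟩

lemma swapB (H : ℝ → ℝ → ℂ) (hH : Continuous ↿H) (x : ℝ) (hx : 0 ≤ x) :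
    (∫ t in (0:ℝ)..x, ∫ u in (x - t)..x, H t u)
      = ∫ u in (0:ℝ)..x, ∫ t in (x - u)..x, H t u := by
  apply swap_master H hH x x hx hx _ _ _ _ ?_ ?_ ?_ ?_ ?_
  · have : {p : ℝ × ℝ | p.1 ∈ Ioc 0 x ∧ p.2 ∈ Ioc (x - p.1) x} =
      ({p : ℝ × ℝ | 0 < p.1} ∩ {p | p.1 ≤ x} ∩ ({p | x - p.1 < p.2} ∩ {p | p.2 ≤ x})) := by
      ext p; simp [Set.mem_Ioc]
    rw [this]
    exact (((measurableSet_lt measurable_const measurable_fst).inter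
      (measurableSet_le measurable_fst measurable_const)).inter
      ((measurableSet_lt ((measurable_const.sub measurable_fst)) measurable_snd).inter
      (measurableSet_le measurable_snd measurable_const)))
  · intro t ht; linarith [ht.1]
  · rintro t ht v ⟨h1, h2⟩; constructor <;> [linarith [ht.2]; exact h2]
  · intro u hu; linarith [hu.1]
  · intro u hu
    apply Filter.Eventually.of_forall
    intro t
    constructor
    · rintro ⟨⟨ht0, htx⟩, ⟨h1, _⟩⟩; exact ⟨by linarith, htx⟩
    · rintro ⟨h1, h2⟩
      refine ⟨⟨by linarith [hu.2], h2⟩, ⟨by linarith, hu.2⟩⟩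

lemma swapRect (H : ℝ → ℝ → ℂ) (hH : Continuous ↿H) (x : ℝ) (hx : 0 ≤ x) :
    (∫ t in (0:ℝ)..x, ∫ u in (0:ℝ)..x, H t u) = ∫ u in (0:ℝ)..x, ∫ t in (0:ℝ)..x, H t u := by
  apply swap_master H hH x x hx hx _ _ _ _ ?_ ?_ ?_ ?_ ?_
  · have : {p : ℝ × ℝ | p.1 ∈ Ioc 0 x ∧ p.2 ∈ Ioc (0:ℝ) x} =
      (Ioc 0 x ×ˢ Ioc 0 x) := by ext p; simp [Set.mem_prod]
    rw [this]; exact measurableSet_Ioc.prod measurableSet_Ioc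
  · exact fun t _ => hx
  · exact fun t ht => le_refl _
  · exact fun u _ => hx
  · intro u hu
    apply Filter.Eventually.of_forall
    intro t
    exact ⟨fun h => h.1, fun h => ⟨h, hu⟩⟩

lemma swapConv (H : ℝ → ℝ → ℂ) (hH : Continuous ↿H) (a b : ℝ) (ha : 0 ≤ a) (hb : 0 ≤ b) :
    (∫ s in (0:ℝ)..a, ∫ u in s..(s + b), H s u)
      = ∫ u in (0:ℝ)..(a + b), ∫ s in (max 0 (u - b))..(min a u), H s u := by
  apply swap_master H hH a (a + b) ha (by linarith) _ _ _ _ ?_ ?_ ?_ ?_ ?_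
  · have : {p : ℝ × ℝ | p.1 ∈ Ioc 0 a ∧ p.2 ∈ Ioc (p.1) (p.1 + b)} =
      ({p : ℝ × ℝ | 0 < p.1} ∩ {p | p.1 ≤ a} ∩ ({p | p.1 < p.2} ∩ {p | p.2 ≤ p.1 + b})) := by
      ext p; simp [Set.mem_Ioc]
    rw [this]
    exact (((measurableSet_lt measurable_const measurable_fst).inter
      (measurableSet_le measurable_fst measurable_const)).inter
      ((measurableSet_lt measurable_fst measurable_snd).inter
      (measurableSet_le measurable_snd (measurable_fst.add measurable_const))))
  · intro t _; linarith
  · rintro t ht v ⟨h1, h2⟩; exact ⟨lt_trans ht.1 h1, by linarith [ht.2]⟩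
  · intro u hu
    apply max_le <;> [exact le_min ha hu.1.le; exact le_min (by linarith [hu.2]) (by linarith)]
  · intro u hu
    filter_upwards [ae_ne_real u, ae_ne_real (u - b)] with s hne1 hne2
    simp only [Set.mem_Ioc, max_lt_iff, le_min_iff]
    constructor
    · rintro ⟨⟨h1, h2⟩, ⟨h3, h4⟩⟩
      refine ⟨⟨h1, lt_of_le_of_ne (by linarith) (Ne.symm hne2)⟩, h2, h3.le⟩
    · rintro ⟨⟨h1, h2⟩, h3, h4⟩
      exact ⟨⟨h1, h3⟩, ⟨lt_of_le_of_ne h4 hne1, by linarith⟩⟩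

lemma contE (lam : ℂ) : Continuous fun u : ℝ => Complex.exp (-Complex.I * lam * u) :=
  Complex.continuous_exp.comp (continuous_const.mul Complex.continuous_ofReal)

lemma exp_shift (lam : ℂ) (k : ℝ → ℂ) (c b : ℝ) :
    Complex.exp (-Complex.I * lam * c) * ∫ r in (0:ℝ)..b, k r * Complex.exp (-Complex.I * lam * r)
      = ∫ u in c..(c + b), k (u - c) * Complex.exp (-Complex.I * lam * u) := by
  have h := intervalIntegral.integral_comp_add_left (a := (0:ℝ)) (b := b)
    (fun u => k (u - c) * Complex.exp (-Complex.I * lam * u)) c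
  rw [add_zero] at h
  rw [← h, ← intervalIntegral.integral_const_mul]
  apply intervalIntegral.integral_congr
  intro r _
  simp only [add_sub_cancel_left]
  have : (-Complex.I * lam * ((c : ℂ) + (r : ℂ)))
      = (-Complex.I * lam * (c : ℂ)) + (-Complex.I * lam * (r : ℂ)) := by ring
  push_cast
  rw [this, Complex.exp_add]
  ring

lemma conv (lam : ℂ) (k₁ k₂ : ℝ → ℂ) (hk₁ : Continuous k₁) (hk₂ : Continuous k₂)
    (a b : ℝ) (ha : 0 ≤ a) (hb : 0 ≤ b) :
    (∫ s in (0:ℝ)..a, k₁ s * Complex.exp (-Complex.I * lam * s))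
      * (∫ r in (0:ℝ)..b, k₂ r * Complex.exp (-Complex.I * lam * r))
    = ∫ u in (0:ℝ)..(a + b),
        (∫ s in (max 0 (u - b))..(min a u), k₁ s * k₂ (u - s))
          * Complex.exp (-Complex.I * lam * u) := by
  set E : ℝ → ℂ := fun u => Complex.exp (-Complex.I * lam * u) with hE
  have step1 : (∫ s in (0:ℝ)..a, k₁ s * E s) * (∫ r in (0:ℝ)..b, k₂ r * E r)
      = ∫ s in (0:ℝ)..a, ∫ u in s..(s + b), k₁ s * (k₂ (u - s) * E u) := by
    rw [← intervalIntegral.integral_mul_const]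
    apply intervalIntegral.integral_congr
    intro s _
    simp only [hE]
    rw [mul_assoc, exp_shift lam k₂ s b, ← intervalIntegral.integral_const_mul]
  rw [step1]
  have hH : Continuous ↿(fun s u => k₁ s * (k₂ (u - s) * E u)) := by
    apply Continuous.mul (hk₁.comp continuous_fst)
    exact ((hk₂.comp (continuous_snd.sub continuous_fst)).mul ((contE lam).comp continuous_snd))
  rw [swapConv _ hH a b ha hb]
  apply intervalIntegral.integral_congr
  intro u _
  dsimp only
  rw [← intervalIntegral.integral_mul_const]
  apply intervalIntegral.integral_congr
  intro s _
  ring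

/-- The convolution-type inner kernel. -/
noncomputable def Fc (P' Q' : ℝ × ℝ → ℂ) (x t u : ℝ) : ℂ :=
  ∫ s in (max 0 (u - (x - t)))..(min t u), P' (t, s) * Q' (x - t, u - s)

/-- The final kernel. -/
noncomputable def Kdef (R' P' Q' : ℝ × ℝ → ℂ) (x u : ℝ) : ℂ :=
    (∫ t in (0:ℝ)..u, R' (Real.pi - t, x - t) * Q' (x - t, u - t))
  + (∫ t in (x - u)..x, R' (Real.pi - t, x - t) * P' (t, u - (x - t)))
  + (∫ t in (0:ℝ)..x, R' (Real.pi - t, x - t) * Fc P' Q' x t u)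

lemma Fc_cont {P' Q' : ℝ × ℝ → ℂ} (hP' : Continuous P') (hQ' : Continuous Q') :
    Continuous (fun q : (ℝ × ℝ) × ℝ => Fc P' Q' q.1.1 q.2 q.1.2) := by
  unfold Fc
  apply cont_param (F := fun (q : (ℝ × ℝ) × ℝ) (s : ℝ) =>
    P' (q.2, s) * Q' (q.1.1 - q.2, q.1.2 - s))
  · apply Continuous.mul
    · exact hP'.comp ((continuous_snd.comp continuous_fst).prodMk continuous_snd)
    · exact hQ'.comp
        ((((continuous_fst.comp (continuous_fst.comp continuous_fst)).sub
          (continuous_snd.comp continuous_fst))).prodMk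
        ((continuous_snd.comp (continuous_fst.comp continuous_fst)).sub continuous_snd))
  · exact continuous_const.max
      ((continuous_snd.comp continuous_fst).sub
        ((continuous_fst.comp continuous_fst).sub continuous_snd))
  · exact continuous_snd.min (continuous_snd.comp continuous_fst)

lemma Kdef_cont {R' P' Q' : ℝ × ℝ → ℂ} (hR' : Continuous R') (hP' : Continuous P')
    (hQ' : Continuous Q') :
    Continuous (fun p : ℝ × ℝ => Kdef R' P' Q' p.1 p.2) := by
  unfold Kdef
  have hρ2 : Continuous (fun z : (ℝ × ℝ) × ℝ => R' (Real.pi - z.2, z.1.1 - z.2)) :=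
    hR'.comp ((continuous_const.sub continuous_snd).prodMk
      ((continuous_fst.comp continuous_fst).sub continuous_snd))
  apply Continuous.add
  apply Continuous.add
  · apply cont_param (F := fun (p : ℝ × ℝ) (t : ℝ) =>
      R' (Real.pi - t, p.1 - t) * Q' (p.1 - t, p.2 - t))
    · exact hρ2.mul (hQ'.comp
        (((continuous_fst.comp continuous_fst).sub continuous_snd).prodMk
         ((continuous_snd.comp continuous_fst).sub continuous_snd)))
    · exact continuous_const
    · exact continuous_snd
  · apply cont_param (F := fun (p : ℝ × ℝ) (t : ℝ) =>
      R' (Real.pi - t, p.1 - t) * P' (t, p.2 - (p.1 - t)))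
    · exact hρ2.mul (hP'.comp (continuous_snd.prodMk
        ((continuous_snd.comp continuous_fst).sub
          ((continuous_fst.comp continuous_fst).sub continuous_snd))))
    · exact continuous_fst.sub continuous_snd
    · exact continuous_fst
  · apply cont_param (F := fun (p : ℝ × ℝ) (t : ℝ) =>
      R' (Real.pi - t, p.1 - t) * Fc P' Q' p.1 t p.2)
    · exact hρ2.mul (Fc_cont hP' hQ')
    · exact continuous_const
    · exact continuous_fst

end Helpers

section Key

set_option maxHeartbeats 2000000 in
lemma key {R' P' Q' : ℝ × ℝ → ℂ} (hR' : Continuous R') (hP' : Continuous P')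
    (hQ' : Continuous Q') (lam : ℂ) (x : ℝ) (hx : 0 ≤ x) :
    (∫ t in (0:ℝ)..x,
        R' (Real.pi - t, x - t) *
          ((Complex.exp (-Complex.I * lam * t)
              + ∫ s in (0:ℝ)..t, P' (t, s) * Complex.exp (-Complex.I * lam * s)) *
           (Complex.exp (-Complex.I * lam * (x - t))
              + ∫ r in (0:ℝ)..(x - t), Q' (x - t, r) * Complex.exp (-Complex.I * lam * r))))
    = (∫ t in (0:ℝ)..x, R' (Real.pi - t, x - t)) * Complex.exp (-Complex.I * lam * x)
      + ∫ u in (0:ℝ)..x, Kdef R' P' Q' x u * Complex.exp (-Complex.I * lam * u) := by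
  unfold Kdef Fc
  have hρ : Continuous fun t : ℝ => R' (Real.pi - t, x - t) :=
    hR'.comp ((continuous_const.sub continuous_id).prodMk (continuous_const.sub continuous_id))
  -- joint continuity of the convolution kernel in (t, u)
  have hFcj : Continuous (fun z : ℝ × ℝ =>
      ∫ s in (max 0 (z.2 - (x - z.1)))..(min z.1 z.2), P' (z.1, s) * Q' (x - z.1, z.2 - s)) := by
    apply cont_param (F := fun (z : ℝ × ℝ) (s : ℝ) => P' (z.1, s) * Q' (x - z.1, z.2 - s))
    · exact ((hP'.comp ((continuous_fst.comp continuous_fst).prodMk continuous_snd)).mul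
        (hQ'.comp ((continuous_const.sub (continuous_fst.comp continuous_fst)).prodMk
          ((continuous_snd.comp continuous_fst).sub continuous_snd))))
    · exact continuous_const.max (continuous_snd.sub (continuous_const.sub continuous_fst))
    · exact continuous_fst.min continuous_snd
  -- pointwise expansion of the integrand
  have point : ∀ t ∈ Set.uIcc (0:ℝ) x,
      R' (Real.pi - t, x - t) *
          ((Complex.exp (-Complex.I * lam * t)
              + ∫ s in (0:ℝ)..t, P' (t, s) * Complex.exp (-Complex.I * lam * s)) *
           (Complex.exp (-Complex.I * lam * (x - t))
              + ∫ r in (0:ℝ)..(x - t), Q' (x - t, r) * Complex.exp (-Complex.I * lam * r)))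
      = R' (Real.pi - t, x - t) * Complex.exp (-Complex.I * lam * x)
        + (∫ u in t..x, (R' (Real.pi - t, x - t) * Q' (x - t, u - t))
            * Complex.exp (-Complex.I * lam * u))
        + (∫ u in (x - t)..x, (R' (Real.pi - t, x - t) * P' (t, u - (x - t)))
            * Complex.exp (-Complex.I * lam * u))
        + (∫ u in (0:ℝ)..x, (R' (Real.pi - t, x - t) *
            ∫ s in (max 0 (u - (x - t)))..(min t u), P' (t, s) * Q' (x - t, u - s))
            * Complex.exp (-Complex.I * lam * u)) := by
    intro t ht
    rw [Set.uIcc_of_le hx] at ht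
    obtain ⟨ht0, htx⟩ := ht
    have h1 : Complex.exp (-Complex.I * lam * t) * Complex.exp (-Complex.I * lam * ((x:ℂ) - t))
        = Complex.exp (-Complex.I * lam * x) := by
      rw [← Complex.exp_add]; congr 1; ring
    have h2 : Complex.exp (-Complex.I * lam * t) *
        (∫ r in (0:ℝ)..(x - t), Q' (x - t, r) * Complex.exp (-Complex.I * lam * r))
        = ∫ u in t..x, Q' (x - t, u - t) * Complex.exp (-Complex.I * lam * u) := by
      have h := exp_shift lam (fun r => Q' (x - t, r)) t (x - t)
      rw [show t + (x - t) = x by ring] at h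
      exact h
    have h3 : Complex.exp (-Complex.I * lam * ((x:ℂ) - t)) *
        (∫ s in (0:ℝ)..t, P' (t, s) * Complex.exp (-Complex.I * lam * s))
        = ∫ u in (x - t)..x, P' (t, u - (x - t)) * Complex.exp (-Complex.I * lam * u) := by
      have h := exp_shift lam (fun s => P' (t, s)) (x - t) t
      rw [show x - t + t = x by ring] at h
      push_cast at h
      exact h
    have h4 : (∫ s in (0:ℝ)..t, P' (t, s) * Complex.exp (-Complex.I * lam * s)) *
        (∫ r in (0:ℝ)..(x - t), Q' (x - t, r) * Complex.exp (-Complex.I * lam * r))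
        = ∫ u in (0:ℝ)..x,
            (∫ s in (max 0 (u - (x - t)))..(min t u), P' (t, s) * Q' (x - t, u - s))
              * Complex.exp (-Complex.I * lam * u) := by
      have h := conv lam (fun s => P' (t, s)) (fun r => Q' (x - t, r))
        (hP'.comp (continuous_const.prodMk continuous_id))
        (hQ'.comp (continuous_const.prodMk continuous_id)) t (x - t) ht0 (by linarith)
      rw [show t + (x - t) = x by ring] at h
      exact h
    have pull : ∀ (cc : ℂ) (aa bb : ℝ) (g : ℝ → ℂ),
        cc * ∫ u in aa..bb, g u * Complex.exp (-Complex.I * lam * u)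
          = ∫ u in aa..bb, (cc * g u) * Complex.exp (-Complex.I * lam * u) := by
      intro cc aa bb g
      rw [← intervalIntegral.integral_const_mul]
      apply intervalIntegral.integral_congr
      intro u _
      dsimp only
      ring
    calc R' (Real.pi - t, x - t) *
          ((Complex.exp (-Complex.I * lam * t)
              + ∫ s in (0:ℝ)..t, P' (t, s) * Complex.exp (-Complex.I * lam * s)) *
           (Complex.exp (-Complex.I * lam * ((x:ℂ) - t))
              + ∫ r in (0:ℝ)..(x - t), Q' (x - t, r) * Complex.exp (-Complex.I * lam * r)))
        = R' (Real.pi - t, x - t) *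
            (Complex.exp (-Complex.I * lam * t) * Complex.exp (-Complex.I * lam * ((x:ℂ) - t)))
          + R' (Real.pi - t, x - t) *
            (Complex.exp (-Complex.I * lam * t) *
              ∫ r in (0:ℝ)..(x - t), Q' (x - t, r) * Complex.exp (-Complex.I * lam * r))
          + R' (Real.pi - t, x - t) *
            (Complex.exp (-Complex.I * lam * ((x:ℂ) - t)) *
              ∫ s in (0:ℝ)..t, P' (t, s) * Complex.exp (-Complex.I * lam * s))
          + R' (Real.pi - t, x - t) *
            ((∫ s in (0:ℝ)..t, P' (t, s) * Complex.exp (-Complex.I * lam * s)) *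
             ∫ r in (0:ℝ)..(x - t), Q' (x - t, r) * Complex.exp (-Complex.I * lam * r)) := by
          ring
      _ = _ := by
          rw [h1, h2, h3, h4,
            pull _ _ _ (fun u => Q' (x - t, u - t)),
            pull _ _ _ (fun u => P' (t, u - (x - t))),
            pull _ _ _ (fun u =>
              ∫ s in (max 0 (u - (x - t)))..(min t u), P' (t, s) * Q' (x - t, u - s))]
  rw [intervalIntegral.integral_congr point]
  -- continuity of the four t-integrands
  have hT0 : Continuous fun t : ℝ =>
      R' (Real.pi - t, x - t) * Complex.exp (-Complex.I * lam * x) := hρ.mul continuous_const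
  have hT1 : Continuous fun t : ℝ => ∫ u in t..x,
      (R' (Real.pi - t, x - t) * Q' (x - t, u - t)) * Complex.exp (-Complex.I * lam * u) := by
    apply cont_param (F := fun (t u : ℝ) =>
      (R' (Real.pi - t, x - t) * Q' (x - t, u - t)) * Complex.exp (-Complex.I * lam * u))
      ?_ continuous_id continuous_const
    exact (((hρ.comp continuous_fst).mul (hQ'.comp
      ((continuous_const.sub continuous_fst).prodMk (continuous_snd.sub continuous_fst)))).mul
      ((contE lam).comp continuous_snd))
  have hT2 : Continuous fun t : ℝ => ∫ u in (x - t)..x,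
      (R' (Real.pi - t, x - t) * P' (t, u - (x - t))) * Complex.exp (-Complex.I * lam * u) := by
    apply cont_param (F := fun (t u : ℝ) =>
      (R' (Real.pi - t, x - t) * P' (t, u - (x - t))) * Complex.exp (-Complex.I * lam * u))
      ?_ (continuous_const.sub continuous_id) continuous_const
    exact (((hρ.comp continuous_fst).mul (hP'.comp
      (continuous_fst.prodMk (continuous_snd.sub (continuous_const.sub continuous_fst))))).mul
      ((contE lam).comp continuous_snd))
  have hT3 : Continuous fun t : ℝ => ∫ u in (0:ℝ)..x,
      (R' (Real.pi - t, x - t) *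
        ∫ s in (max 0 (u - (x - t)))..(min t u), P' (t, s) * Q' (x - t, u - s))
        * Complex.exp (-Complex.I * lam * u) := by
    apply cont_param (F := fun (t u : ℝ) =>
      (R' (Real.pi - t, x - t) *
        ∫ s in (max 0 (u - (x - t)))..(min t u), P' (t, s) * Q' (x - t, u - s))
        * Complex.exp (-Complex.I * lam * u)) ?_ continuous_const continuous_const
    exact (((hρ.comp continuous_fst).mul hFcj).mul ((contE lam).comp continuous_snd))
  erw [intervalIntegral.integral_add (((hT0.add hT1).add hT2).intervalIntegrable _ _)
      (hT3.intervalIntegrable _ _),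
    intervalIntegral.integral_add ((hT0.add hT1).intervalIntegrable _ _)
      (hT2.intervalIntegrable _ _),
    intervalIntegral.integral_add (hT0.intervalIntegrable _ _) (hT1.intervalIntegrable _ _)]
  -- piece 0
  rw [intervalIntegral.integral_mul_const]
  -- swaps
  have hH1 : Continuous ↿(fun t u =>
      (R' (Real.pi - t, x - t) * Q' (x - t, u - t)) * Complex.exp (-Complex.I * lam * u)) :=
    (((hρ.comp continuous_fst).mul (hQ'.comp
      ((continuous_const.sub continuous_fst).prodMk (continuous_snd.sub continuous_fst)))).mul
      ((contE lam).comp continuous_snd))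
  have hH2 : Continuous ↿(fun t u =>
      (R' (Real.pi - t, x - t) * P' (t, u - (x - t))) * Complex.exp (-Complex.I * lam * u)) :=
    (((hρ.comp continuous_fst).mul (hP'.comp
      (continuous_fst.prodMk (continuous_snd.sub (continuous_const.sub continuous_fst))))).mul
      ((contE lam).comp continuous_snd))
  have hH3 : Continuous ↿(fun t u =>
      (R' (Real.pi - t, x - t) *
        ∫ s in (max 0 (u - (x - t)))..(min t u), P' (t, s) * Q' (x - t, u - s))
        * Complex.exp (-Complex.I * lam * u)) :=
    (((hρ.comp continuous_fst).mul hFcj).mul ((contE lam).comp continuous_snd))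
  rw [swapA _ hH1 x hx, swapB _ hH2 x hx, swapRect _ hH3 x hx]
  -- continuity of the three swapped u-integrands
  have hB1 : Continuous fun u : ℝ => ∫ t in (0:ℝ)..u,
      (R' (Real.pi - t, x - t) * Q' (x - t, u - t)) * Complex.exp (-Complex.I * lam * u) := by
    apply cont_param (F := fun (u t : ℝ) =>
      (R' (Real.pi - t, x - t) * Q' (x - t, u - t)) * Complex.exp (-Complex.I * lam * u))
      ?_ continuous_const continuous_id
    exact (((hρ.comp continuous_snd).mul (hQ'.comp
      ((continuous_const.sub continuous_snd).prodMk (continuous_fst.sub continuous_snd)))).mul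
      ((contE lam).comp continuous_fst))
  have hB2 : Continuous fun u : ℝ => ∫ t in (x - u)..x,
      (R' (Real.pi - t, x - t) * P' (t, u - (x - t))) * Complex.exp (-Complex.I * lam * u) := by
    apply cont_param (F := fun (u t : ℝ) =>
      (R' (Real.pi - t, x - t) * P' (t, u - (x - t))) * Complex.exp (-Complex.I * lam * u))
      ?_ (continuous_const.sub continuous_id) continuous_const
    exact (((hρ.comp continuous_snd).mul (hP'.comp
      (continuous_snd.prodMk (continuous_fst.sub (continuous_const.sub continuous_snd))))).mul
      ((contE lam).comp continuous_fst))
  have hB3 : Continuous fun u : ℝ => ∫ t in (0:ℝ)..x,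
      (R' (Real.pi - t, x - t) *
        ∫ s in (max 0 (u - (x - t)))..(min t u), P' (t, s) * Q' (x - t, u - s))
        * Complex.exp (-Complex.I * lam * u) := by
    apply cont_param (F := fun (u t : ℝ) =>
      (R' (Real.pi - t, x - t) *
        ∫ s in (max 0 (u - (x - t)))..(min t u), P' (t, s) * Q' (x - t, u - s))
        * Complex.exp (-Complex.I * lam * u)) ?_ continuous_const continuous_const
    exact (((hρ.comp continuous_snd).mul
      (hFcj.comp (continuous_snd.prodMk continuous_fst))).mul
      ((contE lam).comp continuous_fst))
  erw [add_assoc, add_assoc,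
    ← intervalIntegral.integral_add (hB2.intervalIntegrable _ _) (hB3.intervalIntegrable _ _),
    ← intervalIntegral.integral_add (hB1.intervalIntegrable _ _)
      ((hB2.add hB3).intervalIntegrable _ _)]
  congr 1
  apply intervalIntegral.integral_congr
  intro u _
  dsimp only [Pi.add_apply]
  rw [intervalIntegral.integral_mul_const, intervalIntegral.integral_mul_const,
    intervalIntegral.integral_mul_const]
  ring

end Key

/-- If `w(x,λ) = exp(−iλx) + ∫₀ˣ K₁(x,t) exp(−iλt) dt` and
`ẽ(x,λ) = exp(−iλx) + ∫₀ˣ K₂(x,t) exp(−iλt) dt`, then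
`z(x,λ) := ∫₀ˣ R(π−t, x−t) w(t,λ) ẽ(x−t,λ) dt` has the representation
`z(x,λ) = B(x) exp(−iλx) + ∫₀ˣ K(x,t) exp(−iλt) dt` with `K` continuous on the
triangle and independent of `λ`, where `B(x) = ∫₀ˣ R(π−t, x−t) dt`. -/
theorem stmt_11 (R K₁ K₂ : ℝ → ℝ → ℂ)
    (hR : ContinuousOn (fun p : ℝ × ℝ => R p.1 p.2) Triangle)
    (hK₁ : ContinuousOn (fun p : ℝ × ℝ => K₁ p.1 p.2) Triangle)
    (hK₂ : ContinuousOn (fun p : ℝ × ℝ => K₂ p.1 p.2) Triangle)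
    (w et : ℝ → ℂ → ℂ)
    (hw : ∀ lam : ℂ, ∀ x ∈ Icc (0:ℝ) Real.pi,
      w x lam = Complex.exp (-Complex.I * lam * x)
        + ∫ t in (0:ℝ)..x, K₁ x t * Complex.exp (-Complex.I * lam * t))
    (het : ∀ lam : ℂ, ∀ x ∈ Icc (0:ℝ) Real.pi,
      et x lam = Complex.exp (-Complex.I * lam * x)
        + ∫ t in (0:ℝ)..x, K₂ x t * Complex.exp (-Complex.I * lam * t)) :
    ∃ K : ℝ → ℝ → ℂ,
      ContinuousOn (fun p : ℝ × ℝ => K p.1 p.2) Triangle ∧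
      ∀ lam : ℂ, ∀ x ∈ Icc (0:ℝ) Real.pi,
        (∫ t in (0:ℝ)..x, R (Real.pi - t) (x - t) * w t lam * et (x - t) lam)
        = (∫ t in (0:ℝ)..x, R (Real.pi - t) (x - t)) * Complex.exp (-Complex.I * lam * x)
          + ∫ t in (0:ℝ)..x, K x t * Complex.exp (-Complex.I * lam * t) := by
  obtain ⟨R', hR'c, hR'eq⟩ := exists_ext (fun p => R p.1 p.2) Triangle tri_closed hR
  obtain ⟨P', hP'c, hP'eq⟩ := exists_ext (fun p => K₁ p.1 p.2) Triangle tri_closed hK₁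
  obtain ⟨Q', hQ'c, hQ'eq⟩ := exists_ext (fun p => K₂ p.1 p.2) Triangle tri_closed hK₂
  refine ⟨Kdef R' P' Q', (Kdef_cont hR'c hP'c hQ'c).continuousOn, ?_⟩
  intro lam x hx
  obtain ⟨hx0, hxpi⟩ := hx
  have hcongr : ∀ t ∈ Set.uIcc (0:ℝ) x,
      R (Real.pi - t) (x - t) * w t lam * et (x - t) lam
      = R' (Real.pi - t, x - t) *
          ((Complex.exp (-Complex.I * lam * t)
              + ∫ s in (0:ℝ)..t, P' (t, s) * Complex.exp (-Complex.I * lam * s)) *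
           (Complex.exp (-Complex.I * lam * (x - t))
              + ∫ r in (0:ℝ)..(x - t), Q' (x - t, r) * Complex.exp (-Complex.I * lam * r)))
      := by
    intro t ht
    rw [Set.uIcc_of_le hx0] at ht
    obtain ⟨ht0, htx⟩ := ht
    have hRt : R (Real.pi - t) (x - t) = R' (Real.pi - t, x - t) :=
      (hR'eq (Real.pi - t, x - t) ⟨by simp; linarith, by simp; linarith, by simp; linarith⟩).symm
    have hwt : w t lam = Complex.exp (-Complex.I * lam * t)
        + ∫ s in (0:ℝ)..t, P' (t, s) * Complex.exp (-Complex.I * lam * s) := by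
      rw [hw lam t ⟨ht0, by linarith⟩]
      congr 1
      apply intervalIntegral.integral_congr
      intro s hs
      rw [Set.uIcc_of_le ht0] at hs
      dsimp only
      rw [hP'eq (t, s) ⟨hs.1, hs.2, by simp; linarith⟩]
    have hett : et (x - t) lam = Complex.exp (-Complex.I * lam * (x - t))
        + ∫ r in (0:ℝ)..(x - t), Q' (x - t, r) * Complex.exp (-Complex.I * lam * r) := by
      rw [het lam (x - t) ⟨by linarith, by linarith⟩]
      congr 1
      · norm_cast
      · apply intervalIntegral.integral_congr
        intro r hr
        rw [Set.uIcc_of_le (by linarith : (0:ℝ) ≤ x - t)] at hr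
        dsimp only
        rw [hQ'eq (x - t, r) ⟨hr.1, hr.2, by simp; linarith⟩]
    rw [hRt, hwt, hett, mul_assoc]
  rw [intervalIntegral.integral_congr hcongr, key hR'c hP'c hQ'c lam x hx0]
  congr 2
  apply intervalIntegral.integral_congr
  intro t ht
  rw [Set.uIcc_of_le hx0] at ht
  exact hR'eq (Real.pi - t, x - t) ⟨by simp; linarith [ht.1, ht.2], by simp; linarith [ht.1],
    by simp; linarith [ht.1]⟩
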